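/- Let P be an invertible (model for normally hyperbolic) linear operator on a finite-dimensional graded vector space with retarded and advanced inverses Δ^R, Δ^A satisfying P∘Δ^{R/A} = id and Δ^{R/A}∘P = id, and let K be an odd operator satisfying (-1)^{|β|} P_{βγ} K^γ_σ + (K†)_β^γ P_{γσ} = 0. Then the propagators satisfy the consistency condition (-1)^{|α|} K^α_σ (Δ^*)^{σγ} + K^γ_σ (Δ^*)^{ασ} = 0 for Δ^* ∈ {Δ^R, Δ^A, Δ = Δ^R − Δ^A}. (In the finite-dimensional model Δ^R = Δ^A = P^{-1}, and the statement is (-1)^{|α|} K^α_σ (P^{-1})^{σγ} + K^γ_σ (P^{-1})^{ασ} = 0.) -/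
import Mathlib


/-- The sign `(-1)^s` associated to a parity `s ∈ ℤ/2`. -/
noncomputable def sg (s : ZMod 2) : ℂ := if s = 0 then 1 else -1

lemma sg_mul_self (s : ZMod 2) : sg s * sg s = 1 := by
  unfold sg; split <;> norm_num

lemma sg_zero : sg 0 = 1 := by simp [sg]

/-- For an invertible even graded-symmetric operator `P` with (two-sided)
inverse `Δ` (the finite-dimensional model of the retarded/advanced/causal propagator),
and an odd operator `K` satisfying the compatibility condition
`(-1)^{|β|} P_{βγ} K^γ_σ + (K†)_β^γ P_{γσ} = 0`, the propagator satisfies the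
consistency condition `(-1)^{|α|} K^α_σ Δ^{σγ} + K^γ_σ Δ^{ασ} = 0`. -/
theorem propagator_consistency
    {ι : Type*} [Fintype ι] [DecidableEq ι] (p : ι → ZMod 2) (P K Δ : Matrix ι ι ℂ)
    (hPeven : ∀ α β, P α β ≠ 0 → p α + p β = 0)
    (hPsym : ∀ α β, P α β = sg (p α * p β) * P β α)
    (hKodd : ∀ α β, K α β ≠ 0 → p α + p β = 1)
    (hPΔ : P * Δ = 1) (hΔP : Δ * P = 1)
    (hcompat : ∀ β σ,
      sg (p β) * (∑ γ, P β γ * K γ σ)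
        + ∑ γ, (sg (p β * p γ) * K γ β) * P γ σ = 0) :
    ∀ α γ, sg (p α) * (∑ σ, K α σ * Δ σ γ) + ∑ σ, K γ σ * Δ α σ = 0 := by
  classical
  set S : Matrix ι ι ℂ := Matrix.diagonal (fun α => sg (p α)) with hSdef
  have hSS : S * S = 1 := by
    rw [hSdef, Matrix.diagonal_mul_diagonal]
    ext i j
    by_cases h : i = j <;>
      simp [Matrix.diagonal, Matrix.one_apply, h, sg_mul_self]
  -- SPS = P
  have hSPS : S * P * S = P := by
    ext i j
    rw [Matrix.mul_diagonal, Matrix.diagonal_mul]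
    by_cases h : P i j = 0
    · simp [h]
    · have he := hPeven i j h
      have : p j = p i := by
        have : p j = p j + (p i + p j) := by rw [he]; ring
        simpa [add_comm, add_assoc, add_left_comm, CharTwo.add_self_eq_zero] using this
      rw [this, mul_comm (sg (p i) * P i j), ← mul_assoc, sg_mul_self, one_mul]
  have hSP : S * P = P * S := by
    calc S * P = S * P * (S * S) := by rw [hSS, mul_one]
    _ = (S * P * S) * S := by noncomm_ring
    _ = P * S := by rw [hSPS]
  have hΔS : Δ * S = S * Δ := by
    calc Δ * S = Δ * S * (P * Δ) := by rw [hPΔ, mul_one]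
    _ = Δ * (S * P) * Δ := by noncomm_ring
    _ = Δ * (P * S) * Δ := by rw [hSP]
    _ = (Δ * P) * (S * Δ) := by noncomm_ring
    _ = S * Δ := by rw [hΔP, one_mul]
  have hSΔS : S * Δ * S = Δ := by rw [← hΔS, mul_assoc, hSS, mul_one]
  -- compat in matrix form
  have hC : S * P * K + K.transpose * P = 0 := by
    ext β σ
    have h1 : (S * P * K) β σ = sg (p β) * ∑ γ, P β γ * K γ σ := by
      rw [Matrix.mul_assoc, hSdef, Matrix.diagonal_mul]
      simp [Matrix.mul_apply]
    have h2 : (K.transpose * P) β σ = ∑ γ, (sg (p β * p γ) * K γ β) * P γ σ := by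
      rw [Matrix.mul_apply]
      refine Finset.sum_congr rfl fun γ _ => ?_
      by_cases h : K γ β = 0
      · simp [Matrix.transpose_apply, h]
      · have ho := hKodd γ β h
        have : p β * p γ = 0 := by
          have := ho
          revert this
          generalize p γ = a; generalize p β = b
          revert a b; decide
        simp [Matrix.transpose_apply, this, sg_zero]
    simp only [Matrix.add_apply, Matrix.zero_apply, h1, h2]
    exact hcompat β σ
  -- derive S K Δ + Δ Kᵀ = 0
  have hPK : P * K = -(S * K.transpose * P) := by
    have h1 : S * P * K = -(K.transpose * P) := by
      have := hC
      rw [add_eq_zero_iff_eq_neg] at this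
      exact this
    calc P * K = (S * S) * (P * K) := by rw [hSS, one_mul]
    _ = S * (S * P * K) := by noncomm_ring
    _ = S * (-(K.transpose * P)) := by rw [h1]
    _ = -(S * K.transpose * P) := by noncomm_ring
  have key : S * K * Δ + Δ * K.transpose = 0 := by
    have h1 : S * K * Δ = -(Δ * K.transpose) := by
      calc S * K * Δ = S * ((Δ * P) * K) * Δ := by rw [hΔP, one_mul]
      _ = (S * Δ) * (P * K) * Δ := by noncomm_ring
      _ = (S * Δ) * (-(S * K.transpose * P)) * Δ := by rw [hPK]
      _ = -((S * Δ * S) * K.transpose * (P * Δ)) := by noncomm_ring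
      _ = -(Δ * K.transpose) := by rw [hSΔS, hPΔ, mul_one]
    rw [h1]; exact neg_add_cancel _
  intro α γ
  have h1 : (S * K * Δ) α γ = sg (p α) * ∑ σ, K α σ * Δ σ γ := by
    rw [Matrix.mul_assoc, hSdef, Matrix.diagonal_mul]
    simp [Matrix.mul_apply]
  have h2 : (Δ * K.transpose) α γ = ∑ σ, K γ σ * Δ α σ := by
    rw [Matrix.mul_apply]
    exact Finset.sum_congr rfl fun σ _ => by rw [Matrix.transpose_apply]; ring
  have := congrFun (congrFun key α) γ
  simp only [Matrix.add_apply, Matrix.zero_apply, h1, h2] at this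
  exact this
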